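/- Let C be an n×n real symmetric matrix and S an n×n real symmetric positive definite matrix, and let μ₁ ≥ μ₂ ≥ ... ≥ μₙ be the generalized eigenvalues of the pair (C, S), i.e. the eigenvalues of S^{-1/2} C S^{-1/2}. Then for every full-rank n×m matrix A, trace(AᵀCA (AᵀSA)⁻¹) ≤ μ₁ + ... + μₘ. -/

import Mathlib

open Matrix

private lemma psd_diag_nonneg {n : ℕ} {M : Matrix (Fin n) (Fin n) ℝ}
    (h : M.PosSemidef) (i : Fin n) : 0 ≤ M i i := by
  have := h.dotProduct_mulVec_nonneg (Pi.single i 1)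
  simpa [Matrix.mulVec_single, single_dotProduct] using this

private lemma key_sum (n m : ℕ) (hmn : m ≤ n) (mu : Fin n → ℝ) (hmu : Antitone mu)
    (t : Fin n → ℝ) (h0 : ∀ i, 0 ≤ t i) (h1 : ∀ i, t i ≤ 1)
    (hsum : ∑ i, t i = (m : ℝ)) :
    ∑ i, mu i * t i ≤ ∑ i : Fin m, mu (Fin.castLE hmn i) := by
  rcases Nat.eq_zero_or_pos m with hm | hm
  · subst hm
    have hz : ∀ i ∈ Finset.univ, t i = 0 :=
      (Finset.sum_eq_zero_iff_of_nonneg (fun i _ => h0 i)).mp (by simpa using hsum)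
    have : ∑ i, mu i * t i = 0 := Finset.sum_eq_zero (fun i hi => by
      rw [hz i hi, mul_zero])
    simp [this]
  · have hm1 : m - 1 < n := lt_of_lt_of_le (Nat.sub_lt hm one_pos) hmn
    set c := mu ⟨m - 1, hm1⟩ with hc
    set s : Fin n → ℝ := fun i => if (i : ℕ) < m then 1 else 0 with hs
    set g : ℕ → ℝ := fun k => if h : k < n then mu ⟨k, h⟩ else 0 with hg
    have hss : ∑ i, s i = (m : ℝ) := by
      have : ∑ i : Fin n, s i = ∑ k ∈ Finset.range n, (fun k => if k < m then (1:ℝ) else 0) k := by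
        rw [← Fin.sum_univ_eq_sum_range]
      rw [this, ← Finset.sum_subset (Finset.range_subset_range.mpr hmn)
        (fun x _ hx => by simp [Finset.mem_range] at hx; simp [hx])]
      rw [Finset.sum_ite_of_true (fun x hx => Finset.mem_range.mp hx)]
      simp
    have hmus : ∑ i, mu i * s i = ∑ i : Fin m, mu (Fin.castLE hmn i) := by
      have e1 : ∀ i : Fin n, mu i * s i = (fun k => if k < m then g k else 0) (i : ℕ) := by
        intro i
        simp only [hs, hg, mul_ite, mul_one, mul_zero]
        by_cases h : (i : ℕ) < m <;> simp [h, i.isLt]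
      have e2 : ∑ i : Fin n, mu i * s i
          = ∑ k ∈ Finset.range n, (fun k => if k < m then g k else 0) k := by
        rw [← Fin.sum_univ_eq_sum_range]
        exact Finset.sum_congr rfl (fun i _ => e1 i)
      have e3 : ∑ k ∈ Finset.range m, (fun k => if k < m then g k else 0) k
          = ∑ k ∈ Finset.range n, (fun k => if k < m then g k else 0) k :=
        Finset.sum_subset (Finset.range_subset_range.mpr hmn)
          (fun x _ hx => by simp [Finset.mem_range] at hx; simp [hx])
      have e4 : ∑ i : Fin m, mu (Fin.castLE hmn i)
          = ∑ k ∈ Finset.range m, (fun k => if k < m then g k else 0) k := by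
        rw [← Fin.sum_univ_eq_sum_range]
        refine Finset.sum_congr rfl (fun i _ => ?_)
        have hin : (i : ℕ) < n := lt_of_lt_of_le i.isLt hmn
        simp [hg, i.isLt, hin, Fin.castLE]
      rw [e2, ← e3, e4]
    have key : ∀ i : Fin n, (mu i - c) * (t i - s i) ≤ 0 := by
      intro i
      by_cases h : (i : ℕ) < m
      · have hts : t i - s i ≤ 0 := by simp [hs, h]; linarith [h1 i]
        have hle : i ≤ (⟨m - 1, hm1⟩ : Fin n) := by
          rw [Fin.le_def]; exact Nat.le_sub_one_of_lt h
        have : c ≤ mu i := hmu hle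
        exact mul_nonpos_of_nonneg_of_nonpos (by linarith) hts
      · have hts : 0 ≤ t i - s i := by simp [hs, h]; linarith [h0 i]
        have hle : (⟨m - 1, hm1⟩ : Fin n) ≤ i := by
          rw [Fin.le_def]
          exact le_trans (Nat.sub_le m 1) (not_lt.mp h)
        have : mu i ≤ c := hmu hle
        exact mul_nonpos_of_nonpos_of_nonneg (by linarith) hts
    have hsum_le : ∑ i, (mu i - c) * (t i - s i) ≤ 0 :=
      Finset.sum_nonpos (fun i _ => key i)
    have expand : ∑ i, (mu i - c) * (t i - s i)
        = ∑ i, mu i * t i - ∑ i, mu i * s i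
          - (c * ∑ i, t i - c * ∑ i, s i) := by
      rw [Finset.mul_sum, Finset.mul_sum, ← Finset.sum_sub_distrib,
        ← Finset.sum_sub_distrib, ← Finset.sum_sub_distrib]
      exact Finset.sum_congr rfl (fun i _ => by ring)
    rw [expand, hsum, hss] at hsum_le
    linarith [hmus ▸ hsum_le]

/-- Subspace variational theorem (finite-dimensional): if `μ₁ ≥ ... ≥ μₙ` are the
generalized eigenvalues of the pair `(C, S)`, i.e. the eigenvalues of
`S^{-1/2} C S^{-1/2}` where `R = S^{1/2}` is the positive definite square root of `S`,
then for every full-rank `n × m` matrix `A`,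
`trace (Aᵀ C A (Aᵀ S A)⁻¹) ≤ μ₁ + ... + μₘ`. -/
theorem gmrq_upper_bound (n m : ℕ) (hmn : m ≤ n)
    (C S : Matrix (Fin n) (Fin n) ℝ) (hC : C.IsSymm) (hS : S.PosDef)
    (R : Matrix (Fin n) (Fin n) ℝ) (hR : R.PosDef) (hRR : R * R = S)
    (mu : Fin n → ℝ) (hmu : Antitone mu)
    (U : Fin n → Fin n → ℝ)
    (hEig : ∀ i, (R⁻¹ * C * R⁻¹).mulVec (U i) = mu i • U i)
    (hOrtho : ∀ i j, U i ⬝ᵥ U j = if i = j then (1 : ℝ) else 0)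
    (A : Matrix (Fin n) (Fin m) ℝ) (hA : A.rank = m) :
    (Aᵀ * C * A * (Aᵀ * S * A)⁻¹).trace ≤ ∑ i : Fin m, mu (Fin.castLE hmn i) := by
  classical
  -- basic facts about R
  have hRT : Rᵀ = R := by
    rw [← conjTranspose_eq_transpose_of_trivial]; exact hR.isHermitian
  have hRdet : IsUnit R.det := isUnit_iff_ne_zero.mpr hR.det_pos.ne'
  have hRinv1 : R * R⁻¹ = 1 := mul_nonsing_inv R hRdet
  have hRinv2 : R⁻¹ * R = 1 := nonsing_inv_mul R hRdet
  set B := R⁻¹ * C * R⁻¹ with hB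
  set T := R * A with hT
  -- T has full column rank, so its mulVec is injective
  have hTrank : T.rank = m := by
    rw [hT, Matrix.rank_mul_eq_right_of_isUnit_det R A hRdet, hA]
  have hTker : ∀ x : Fin m → ℝ, T.mulVec x = 0 → x = 0 := by
    have hr : LinearMap.ker T.mulVecLin = ⊥ := by
      have h1 : T.rank = Module.finrank ℝ (LinearMap.range T.mulVecLin) := rfl
      have h2 := LinearMap.finrank_range_add_finrank_ker T.mulVecLin
      rw [← h1, hTrank] at h2
      simp only [Module.finrank_fintype_fun_eq_card, Fintype.card_fin] at h2
      have : Module.finrank ℝ (LinearMap.ker T.mulVecLin) = 0 := by omega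
      exact Submodule.finrank_eq_zero.mp this
    intro x hx
    exact Matrix.ker_mulVecLin_eq_bot_iff.mp hr x hx
  -- G = Tᵀ T is positive definite
  set G := Tᵀ * T with hGdef
  have hGpsd : G.PosSemidef := by
    have := Matrix.posSemidef_conjTranspose_mul_self T
    rwa [conjTranspose_eq_transpose_of_trivial] at this
  have hG : G.PosDef := by
    refine Matrix.PosDef.of_dotProduct_mulVec_pos hGpsd.isHermitian (fun x hx => ?_)
    have hTx : T.mulVec x ≠ 0 := fun h => hx (hTker x h)
    have : star x ⬝ᵥ G *ᵥ x = (T *ᵥ x) ⬝ᵥ (T *ᵥ x) := by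
      rw [hGdef, ← Matrix.mulVec_mulVec, Matrix.dotProduct_mulVec,
        Matrix.vecMul_transpose]
      simp
    rw [this]
    have hnn : 0 ≤ (T *ᵥ x) ⬝ᵥ (T *ᵥ x) :=
      Fintype.sum_nonneg fun i => mul_self_nonneg _
    rcases lt_or_eq_of_le hnn with h | h
    · exact h
    · exact absurd (dotProduct_self_eq_zero.mp h.symm) hTx
  have hGdet : IsUnit G.det := isUnit_iff_ne_zero.mpr hG.det_pos.ne'
  have hGinv1 : G * G⁻¹ = 1 := mul_nonsing_inv G hGdet
  have hGinv2 : G⁻¹ * G = 1 := nonsing_inv_mul G hGdet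
  have hGi : G⁻¹.PosDef := hG.inv
  have hGiT : G⁻¹ᵀ = G⁻¹ := by
    rw [← conjTranspose_eq_transpose_of_trivial]; exact hGi.isHermitian
  -- the projection P
  set P := T * G⁻¹ * Tᵀ with hP
  have hPpsd : P.PosSemidef := by
    have := hGi.posSemidef.mul_mul_conjTranspose_same T
    rwa [conjTranspose_eq_transpose_of_trivial] at this
  have hPT : Pᵀ = P := by
    rw [← conjTranspose_eq_transpose_of_trivial]; exact hPpsd.isHermitian
  have hPP : P * P = P := by
    rw [hP]
    calc T * G⁻¹ * Tᵀ * (T * G⁻¹ * Tᵀ)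
        = T * (G⁻¹ * (Tᵀ * T) * G⁻¹) * Tᵀ := by
          simp only [Matrix.mul_assoc]
      _ = T * G⁻¹ * Tᵀ := by rw [← hGdef, hGinv2, Matrix.one_mul]
  have h1Ppsd : (1 - P).PosSemidef := by
    have h := Matrix.posSemidef_conjTranspose_mul_self (1 - P)
    rw [conjTranspose_eq_transpose_of_trivial, Matrix.transpose_sub,
      Matrix.transpose_one, hPT] at h
    have e : (1 - P) * (1 - P) = 1 - P := by
      rw [Matrix.mul_sub, Matrix.mul_one, Matrix.sub_mul, Matrix.one_mul, hPP]
      abel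
    rwa [e] at h
  -- rewrite the LHS as trace (B * P)
  have hSA : Aᵀ * S * A = G := by
    rw [← hRR, hGdef, hT, Matrix.transpose_mul, hRT]
    simp only [Matrix.mul_assoc]
  have hcancel1 : ∀ X : Matrix (Fin n) (Fin m) ℝ, R * (R⁻¹ * X) = X := by
    intro X; rw [← Matrix.mul_assoc, hRinv1, Matrix.one_mul]
  have hcancel2 : ∀ X : Matrix (Fin n) (Fin m) ℝ, R⁻¹ * (R * X) = X := by
    intro X; rw [← Matrix.mul_assoc, hRinv2, Matrix.one_mul]
  have hCA : Aᵀ * C * A = Tᵀ * B * T := by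
    rw [hT, hB, Matrix.transpose_mul, hRT]
    simp only [Matrix.mul_assoc]
    rw [hcancel2 A, hcancel1 (C * A)]
  have hLHS : (Aᵀ * C * A * (Aᵀ * S * A)⁻¹).trace = (B * P).trace := by
    rw [hCA, hSA, hP]
    have e : Tᵀ * B * T * G⁻¹ = Tᵀ * (B * (T * G⁻¹)) := by
      simp only [Matrix.mul_assoc]
    rw [e, Matrix.trace_mul_comm]
    simp only [Matrix.mul_assoc]
  rw [hLHS]
  -- the orthogonal matrix Q with rows U i
  set Q : Matrix (Fin n) (Fin n) ℝ := Matrix.of U with hQ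
  have hQQ : Q * Qᵀ = 1 := by
    ext i j
    have := hOrtho i j
    simp only [Matrix.mul_apply, Matrix.transpose_apply, hQ, Matrix.of_apply]
    rw [Matrix.one_apply]
    simpa [dotProduct] using this
  have hQQ' : Qᵀ * Q = 1 := mul_eq_one_comm.mp hQQ
  set D := Matrix.diagonal mu with hD
  have hBQ : B * Qᵀ = Qᵀ * D := by
    ext i j
    have h := congrFun (hEig j) i
    simp only [Matrix.mulVec, dotProduct, Pi.smul_apply, smul_eq_mul] at h
    rw [hD, Matrix.mul_apply, Matrix.mul_diagonal]
    simp only [Matrix.transpose_apply, hQ, Matrix.of_apply]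
    rw [h]
    ring
  have hBQD : B = Qᵀ * D * Q := by
    calc B = B * (Qᵀ * Q) := by rw [hQQ', Matrix.mul_one]
      _ = B * Qᵀ * Q := (Matrix.mul_assoc B Qᵀ Q).symm
      _ = Qᵀ * D * Q := by rw [hBQ]
  -- M = Q P Qᵀ
  set M := Q * P * Qᵀ with hM
  have hMpsd : M.PosSemidef := by
    have := hPpsd.mul_mul_conjTranspose_same Q
    rwa [conjTranspose_eq_transpose_of_trivial] at this
  have h1Mpsd : (1 - M).PosSemidef := by
    have h := h1Ppsd.mul_mul_conjTranspose_same Q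
    rw [conjTranspose_eq_transpose_of_trivial] at h
    have e : Q * (1 - P) * Qᵀ = 1 - M := by
      rw [Matrix.mul_sub, Matrix.mul_one, Matrix.sub_mul, hQQ, hM]
    rwa [e] at h
  -- trace computations
  have htrP : P.trace = (m : ℝ) := by
    rw [hP, Matrix.trace_mul_comm (T * G⁻¹) Tᵀ, ← Matrix.mul_assoc Tᵀ T G⁻¹,
      ← hGdef, hGinv1, Matrix.trace_one]
    simp
  have htrM : M.trace = (m : ℝ) := by
    rw [hM, Matrix.trace_mul_comm (Q * P) Qᵀ, ← Matrix.mul_assoc Qᵀ Q P, hQQ',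
      Matrix.one_mul, htrP]
  have htrBP : (B * P).trace = ∑ i, mu i * M i i := by
    have e0 : B * P = Qᵀ * (D * (Q * P)) := by
      rw [hBQD]; simp only [Matrix.mul_assoc]
    rw [e0, Matrix.trace_mul_comm Qᵀ (D * (Q * P))]
    have e2 : D * (Q * P) * Qᵀ = D * M := by rw [hM]; simp only [Matrix.mul_assoc]
    rw [e2, Matrix.trace]
    refine Finset.sum_congr rfl (fun i _ => ?_)
    simp [Matrix.diag, hD, Matrix.diagonal_mul]
  rw [htrBP]
  -- apply the combinatorial lemma
  refine key_sum n m hmn mu hmu (fun i => M i i) (fun i => psd_diag_nonneg hMpsd i)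
    (fun i => ?_) ?_
  · have := psd_diag_nonneg h1Mpsd i
    simp only [Matrix.sub_apply, Matrix.one_apply_eq] at this
    linarith
  · exact htrM
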